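/- Suppose c admits an AAT representation (u, Γ) and violates Past Independence: there exist a history h and a choice set A with c̃(h)(A) = y ≠ x = c₀(A). Then c violates Full Stability: there exists a sequence of choice sets along which x is chosen from a set containing y at one stage, and y is chosen from a set containing x at a later stage. -/

import Mathlib

open Finset

variable {X : Type*}

/-- A history is valid if every choice set in it is nonempty. -/
def ValidHist (h : List (Finset X)) : Prop := ∀ A ∈ h, A.Nonempty

/-- The set of alternatives chosen at some point along history `h`,
where the choice at stage `i` is made from `h.get i` given the prior history `h.take i`. -/
def chosenSet (ct : List (Finset X) → Finset X → X) (h : List (Finset X)) : Set X :=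
  {x | ∃ i : Fin h.length, ct (h.take i.1) (h.get i) = x}

/-- Effective consideration set after history `h` facing choice set `A`. -/
def consider (ct : List (Finset X) → Finset X → X) (Γ : Finset X → Set X)
    (h : List (Finset X)) (A : Finset X) : Set X :=
  Γ A ∪ (chosenSet ct h ∩ ↑A)

/-- `(u, Γ)` is an AAT representation of the choice process `ct`:
`Γ A` is a nonempty subset of `A`, and the choice after any valid history `h` from any
nonempty `A` is the unique `u`-maximizer of `Γ A ∪ (chosenSet h ∩ A)`. -/
def IsAAT (ct : List (Finset X) → Finset X → X) (u : X → ℝ) (Γ : Finset X → Set X) : Prop :=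
  (∀ A : Finset X, A.Nonempty → (Γ A).Nonempty ∧ Γ A ⊆ ↑A) ∧
  ∀ h : List (Finset X), ValidHist h → ∀ A : Finset X, A.Nonempty →
    ct h A ∈ consider ct Γ h A ∧
      ∀ z ∈ consider ct Γ h A, z ≠ ct h A → u z < u (ct h A)

/-- The set of ever-chosen alternatives. -/
def everChosen (ct : List (Finset X) → Finset X → X) : Set X :=
  {x | ∃ (h : List (Finset X)) (A : Finset X), ValidHist h ∧ A.Nonempty ∧ ct h A = x}

/-- The history consisting of the first `n` choice sets of an infinite sequence. -/
def prefHist (seq : ℕ → Finset X) (n : ℕ) : List (Finset X) := (List.range n).map seq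

/-- The choice made at stage `n` of the infinite sequence `seq`. -/
def choiceAt (ct : List (Finset X) → Finset X → X) (seq : ℕ → Finset X) (n : ℕ) : X :=
  ct (prefHist seq n) (seq n)

/-- The switch relation `x 𝕊 y`: in some sequence of nonempty choice sets, `y` is chosen at
some stage and `x` is chosen at a strictly later stage from a set containing `y`. -/
def Switch (ct : List (Finset X) → Finset X → X) (x y : X) : Prop :=
  x ≠ y ∧ ∃ seq : ℕ → Finset X, (∀ n, (seq n).Nonempty) ∧
    ∃ i j : ℕ, i < j ∧ choiceAt ct seq i = y ∧ y ∈ seq j ∧ choiceAt ct seq j = x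

/-- Under AAT, a violation of Past Independence (`c̃(h)(A) = y ≠ x = c₀(A)`) yields a
violation of Full Stability: some sequence chooses `x` from a set containing `y` at one
stage and `y` from a set containing `x` at a later stage. -/
theorem stmt13 (ct : List (Finset X) → Finset X → X) (u : X → ℝ) (Γ : Finset X → Set X)
    (hAAT : IsAAT ct u Γ) (h : List (Finset X)) (hh : ValidHist h)
    (A : Finset X) (hA : A.Nonempty) (x y : X)
    (hx : ct [] A = x) (hy : ct h A = y) (hne : y ≠ x) :
    ∃ seq : ℕ → Finset X, (∀ n, (seq n).Nonempty) ∧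
      ∃ i j : ℕ, i < j ∧ y ∈ seq i ∧ choiceAt ct seq i = x ∧
        x ∈ seq j ∧ choiceAt ct seq j = y := by
  classical
  -- basic facts
  have hvnil : ValidHist ([] : List (Finset X)) := by intro B hB; cases hB
  have hcnil : chosenSet ct ([] : List (Finset X)) = ∅ := by
    ext z; simp [chosenSet]
  -- x ∈ Γ A
  have hxΓ : x ∈ Γ A := by
    have := (hAAT.2 [] hvnil A hA).1
    rw [hx] at this
    rcases this with h1 | h2
    · exact h1
    · rw [hcnil] at h2; exact absurd h2.1 (Set.notMem_empty x)
  have hxA : x ∈ A := (hAAT.1 A hA).2 hxΓ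
  -- y ∈ A
  have hymem : y ∈ consider ct Γ h A := by
    have := (hAAT.2 h hh A hA).1; rwa [hy] at this
  have hyA : y ∈ A := by
    rcases hymem with h1 | h2
    · exact (hAAT.1 A hA).2 h1
    · exact h2.2
  -- u x < u y
  have hxy : u x < u y := by
    have := (hAAT.2 h hh A hA).2 x (Or.inl hxΓ) (by rw [hy]; exact fun e => hne e.symm)
    rwa [hy] at this
  -- the sequence
  set seq : ℕ → Finset X := fun n => if n = 0 then A else if n = 1 then {y} else {x, y}
    with hseq
  have hne0 : ∀ n, (seq n).Nonempty := by
    intro n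
    rcases n with _ | _ | n
    · simpa [hseq] using hA
    · exact ⟨y, by simp [hseq]⟩
    · exact ⟨x, by simp [hseq]⟩
  refine ⟨seq, hne0, 0, 2, by norm_num, ?_, ?_, ?_, ?_⟩
  · simpa [hseq] using hyA
  · simp only [choiceAt, prefHist, hseq, List.range_zero, List.map_nil]
    simpa using hx
  · simp [hseq]
  · have hpref1 : prefHist seq 1 = [A] := by
      simp [prefHist, List.range_succ, hseq]
    have hpref2 : prefHist seq 2 = [A, ({y} : Finset X)] := by
      simp [prefHist, List.range_succ, hseq]
    have hv1 : ValidHist [A] := by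
      intro B hB; rw [List.mem_singleton] at hB; subst hB; exact hA
    have hv2 : ValidHist [A, ({y} : Finset X)] := by
      intro B hB
      simp only [List.mem_cons, List.mem_singleton, List.not_mem_nil, or_false] at hB
      rcases hB with hB | hB <;> subst hB
      · exact hA
      · exact ⟨y, by simp⟩
    -- ct [A] {y} = y
    have hcy : ct [A] ({y} : Finset X) = y := by
      have hmem := (hAAT.2 [A] hv1 {y} ⟨y, by simp⟩).1
      rcases hmem with h1 | h2
      · have := (hAAT.1 {y} ⟨y, by simp⟩).2 h1
        simpa using this
      · simpa using h2.2
    -- y ∈ chosenSet ct [A, {y}]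
    have hychosen : y ∈ chosenSet ct [A, ({y} : Finset X)] := by
      exact ⟨⟨1, by norm_num⟩, by simpa using hcy⟩
    have hxyne : ({x, y} : Finset X).Nonempty := ⟨x, by simp⟩
    have hmem := (hAAT.2 [A, {y}] hv2 {x, y} hxyne).1
    have hyc : y ∈ consider ct Γ [A, {y}] ({x, y} : Finset X) :=
      Or.inr ⟨hychosen, by simp⟩
    have hsub : ct [A, ({y} : Finset X)] ({x, y} : Finset X) ∈ ({x, y} : Finset X) := by
      rcases hmem with h1 | h2
      · exact (hAAT.1 {x, y} hxyne).2 h1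
      · exact h2.2
    have : ct [A, ({y} : Finset X)] ({x, y} : Finset X) = y := by
      rcases Finset.mem_insert.1 hsub with he | he
      · exfalso
        have := (hAAT.2 [A, {y}] hv2 {x, y} hxyne).2 y hyc (by rw [he]; exact hne)
        rw [he] at this
        exact absurd hxy (not_lt.2 this.le)
      · simpa using he
    simp only [choiceAt, hpref2]
    simpa [hseq] using this
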